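/- For n ≥ 2 and m ≥ 2n, R(K_{1,n}, W_m) = n + m − 1 if both n and m are even, and n + m otherwise. -/

import Mathlib

open SimpleGraph

/-- `G` contains a copy of `H` (as a subgraph). -/
def HasCopy {α β : Type*} (G : SimpleGraph α) (H : SimpleGraph β) : Prop :=
  ∃ f : H →g G, Function.Injective f

/-- The wheel `W m`: a cycle `C m` together with a hub (`none`) adjacent to all cycle vertices. -/
def wheelGraph (m : ℕ) : SimpleGraph (Option (Fin m)) where
  Adj x y :=
    match x, y with
    | some a, some b => (cycleGraph m).Adj a b
    | some _, none => True
    | none, some _ => True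
    | none, none => False
  symm := by
    refine ⟨?_⟩
    intro x y h
    match x, y with
    | some a, some b => exact (cycleGraph m).adj_symm h
    | some _, none => trivial
    | none, some _ => trivial
  loopless := by
    refine ⟨?_⟩
    intro x h
    match x with
    | some a => exact (cycleGraph m).irrefl h
    | none => exact h

/-- The star `K_{1,n}`. -/
def starGraph (n : ℕ) : SimpleGraph (Unit ⊕ Fin n) := completeBipartiteGraph Unit (Fin n)

/-- `r` is a Ramsey number for the pair `(G₁, G₂)`. -/
def IsRamsey {α β : Type*} (G₁ : SimpleGraph α) (G₂ : SimpleGraph β) (r : ℕ) : Prop :=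
  ∀ G : SimpleGraph (Fin r), HasCopy G G₁ ∨ HasCopy Gᶜ G₂

/-- The Ramsey number `R(G₁, G₂)`. -/
noncomputable def ramseyNumber {α β : Type*} (G₁ : SimpleGraph α) (G₂ : SimpleGraph β) : ℕ :=
  sInf {r | IsRamsey G₁ G₂ r}

set_option linter.unusedSectionVars false
set_option linter.unusedVariables false
set_option maxHeartbeats 1000000

open Finset Function

section Dirac
variable {α : Type*} [Fintype α] [DecidableEq α] {G : SimpleGraph α} [DecidableRel G.Adj]

private lemma mod_cancel {K j a b : ℕ} (ha : a < K) (hb : b < K)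
    (h : (j + a) % K = (j + b) % K) : a = b := by
  have h' : a ≡ b [MOD K] := Nat.ModEq.add_left_cancel' j h
  rw [Nat.ModEq, Nat.mod_eq_of_lt ha, Nat.mod_eq_of_lt hb] at h'
  exact h'

section path
variable {k : ℕ} {p : Fin (k+1) → α}

/-- If `p` is a maximal path, every neighbor of its head is on it. -/
lemma nbr_head_mem_range
    (hmax : ∀ q : Fin (k+2) → α, Function.Injective q →
      (∀ i : ℕ, (h : i < k+1) → G.Adj (q ⟨i, by omega⟩) (q ⟨i+1, by omega⟩)) → False)
    (hadj : ∀ i : ℕ, (h : i < k) → G.Adj (p ⟨i, by omega⟩) (p ⟨i+1, by omega⟩))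
    (hinj : Function.Injective p)
    {w : α} (hw : G.Adj (p ⟨0, by omega⟩) w) : w ∈ Set.range p := by
  by_contra hwr
  apply hmax (fun j => if j.val = 0 then w else p ⟨j.val - 1, by omega⟩)
  · intro a b hab
    by_cases ha : a.val = 0 <;> by_cases hb : b.val = 0
    · exact Fin.ext (by omega)
    · simp only [if_pos ha, if_neg hb] at hab
      exact absurd ⟨_, hab.symm⟩ hwr
    · simp only [if_neg ha, if_pos hb] at hab
      exact absurd ⟨_, hab⟩ hwr
    · simp only [if_neg ha, if_neg hb] at hab
      have h2 := hinj hab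
      rw [Fin.mk.injEq] at h2
      exact Fin.ext (by omega)
  · intro i h
    by_cases hi : i = 0
    · subst hi
      simp only [if_pos rfl, if_neg (by omega : ¬ (1:ℕ) = 0)]
      exact hw.symm
    · simp only [if_neg (by omega : ¬ i = 0), if_neg (by omega : ¬ i + 1 = 0)]
      have h2 := hadj (i-1) (by omega)
      have e1 : (⟨i + 1 - 1, by omega⟩ : Fin (k+1)) = ⟨(i-1)+1, by omega⟩ := by
        rw [Fin.mk.injEq]; omega
      rw [e1]
      exact h2

/-- If `p` is a maximal path, every neighbor of its last vertex is on it. -/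
lemma nbr_last_mem_range
    (hmax : ∀ q : Fin (k+2) → α, Function.Injective q →
      (∀ i : ℕ, (h : i < k+1) → G.Adj (q ⟨i, by omega⟩) (q ⟨i+1, by omega⟩)) → False)
    (hadj : ∀ i : ℕ, (h : i < k) → G.Adj (p ⟨i, by omega⟩) (p ⟨i+1, by omega⟩))
    (hinj : Function.Injective p)
    {w : α} (hw : G.Adj (p ⟨k, by omega⟩) w) : w ∈ Set.range p := by
  by_contra hwr
  apply hmax (fun j => if h : j.val ≤ k then p ⟨j.val, by omega⟩ else w)
  · intro a b hab
    by_cases ha : a.val ≤ k <;> by_cases hb : b.val ≤ k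
    · simp only [dif_pos ha, dif_pos hb] at hab
      have h2 := hinj hab
      rw [Fin.mk.injEq] at h2
      exact Fin.ext h2
    · simp only [dif_pos ha, dif_neg hb] at hab
      exact absurd ⟨_, hab⟩ hwr
    · simp only [dif_neg ha, dif_pos hb] at hab
      exact absurd ⟨_, hab.symm⟩ hwr
    · exact Fin.ext (by omega)
  · intro i h
    by_cases hi : i = k
    · subst hi
      simp only [dif_pos (le_refl i), dif_neg (by omega : ¬ i + 1 ≤ i)]
      exact hw
    · simp only [dif_pos (by omega : i ≤ k), dif_pos (by omega : i + 1 ≤ k)]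
      exact hadj i (by omega)

lemma deg_le_of_nbrs_in_range (hinj : Function.Injective p) {v : α} (hv : v ∈ Set.range p)
    (hn : ∀ w, G.Adj v w → w ∈ Set.range p) : G.degree v ≤ k := by
  have hsub : G.neighborFinset v ⊆ (Finset.univ.image p).erase v := by
    intro w hw
    rw [mem_neighborFinset] at hw
    refine Finset.mem_erase.2 ⟨hw.ne', ?_⟩
    obtain ⟨j, rfl⟩ := hn w hw
    exact mem_image.2 ⟨j, mem_univ j, rfl⟩
  have himg : (Finset.univ.image p).card = k + 1 := by
    rw [Finset.card_image_of_injective _ hinj, card_univ, Fintype.card_fin]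
  have hvmem : v ∈ Finset.univ.image p := by
    obtain ⟨j, rfl⟩ := hv; exact mem_image.2 ⟨j, mem_univ j, rfl⟩
  calc G.degree v = (G.neighborFinset v).card := rfl
    _ ≤ ((Finset.univ.image p).erase v).card := Finset.card_le_card hsub
    _ = (Finset.univ.image p).card - 1 := Finset.card_erase_of_mem hvmem
    _ ≤ k := by omega
/-- Counting lemma: the number of indices `i < k` with `p 0 ~ p (i+1)` is `deg (p 0)`,
provided all neighbors of `p 0` lie on `p`. -/
lemma card_chord_head
    (hinj : Function.Injective p)
    (hn : ∀ w, G.Adj (p ⟨0, by omega⟩) w → w ∈ Set.range p) :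
    (Finset.univ.filter fun i : Fin k =>
      G.Adj (p ⟨0, by omega⟩) (p ⟨i.val + 1, by omega⟩)).card = G.degree (p ⟨0, by omega⟩) := by
  rw [← card_neighborFinset_eq_degree]
  apply Finset.card_bij (fun (i : Fin k) _ => p ⟨i.val + 1, by omega⟩)
  · intro i hi
    rw [Finset.mem_filter] at hi
    exact (mem_neighborFinset _ _ _).2 hi.2
  · intro a ha b hb hab
    have h2 := hinj hab
    rw [Fin.mk.injEq] at h2
    exact Fin.ext (by omega)
  · intro w hw
    rw [mem_neighborFinset] at hw
    obtain ⟨j, rfl⟩ := hn w hw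
    have hj0 : j.val ≠ 0 := by
      intro h
      have : j = ⟨0, by omega⟩ := Fin.ext h
      rw [this] at hw
      exact G.irrefl hw
    refine ⟨⟨j.val - 1, by omega⟩, ?_, ?_⟩
    · rw [Finset.mem_filter]
      refine ⟨Finset.mem_univ _, ?_⟩
      have e1 : (⟨j.val - 1 + 1, by omega⟩ : Fin (k+1)) = j := by
        rw [Fin.ext_iff]; simp; omega
      rw [e1]; exact hw
    · apply congrArg
      rw [Fin.ext_iff]; simp; omega

lemma card_chord_last
    (hinj : Function.Injective p)
    (hn : ∀ w, G.Adj (p ⟨k, by omega⟩) w → w ∈ Set.range p) :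
    (Finset.univ.filter fun i : Fin k =>
      G.Adj (p ⟨k, by omega⟩) (p ⟨i.val, by omega⟩)).card = G.degree (p ⟨k, by omega⟩) := by
  rw [← card_neighborFinset_eq_degree]
  apply Finset.card_bij (fun (i : Fin k) _ => p ⟨i.val, by omega⟩)
  · intro i hi
    rw [Finset.mem_filter] at hi
    exact (mem_neighborFinset _ _ _).2 hi.2
  · intro a ha b hb hab
    have h2 := hinj hab
    rw [Fin.mk.injEq] at h2
    exact Fin.ext (by omega)
  · intro w hw
    rw [mem_neighborFinset] at hw
    obtain ⟨j, rfl⟩ := hn w hw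
    have hjk : j.val ≠ k := by
      intro h
      have : j = ⟨k, by omega⟩ := Fin.ext h
      rw [this] at hw
      exact G.irrefl hw
    refine ⟨⟨j.val, by omega⟩, ?_, ?_⟩
    · rw [Finset.mem_filter]
      refine ⟨Finset.mem_univ _, ?_⟩
      have e1 : (⟨j.val, by omega⟩ : Fin (k+1)) = j := by
        rw [Fin.ext_iff]
      rw [e1]; exact hw
    · congr 1

/-- From a maximal path we get a "crossing chord" pair. -/
lemma exists_chord
    (hmax : ∀ q : Fin (k+2) → α, Function.Injective q →
      (∀ i : ℕ, (h : i < k+1) → G.Adj (q ⟨i, by omega⟩) (q ⟨i+1, by omega⟩)) → False)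
    (hadj : ∀ i : ℕ, (h : i < k) → G.Adj (p ⟨i, by omega⟩) (p ⟨i+1, by omega⟩))
    (hinj : Function.Injective p)
    (hdeg : ∀ v, Fintype.card α ≤ 2 * G.degree v) :
    ∃ i : ℕ, ∃ h : i < k, G.Adj (p ⟨0, by omega⟩) (p ⟨i+1, by omega⟩) ∧
      G.Adj (p ⟨k, by omega⟩) (p ⟨i, by omega⟩) := by
  classical
  set m := Fintype.card α with hmdef
  have hnh : ∀ w, G.Adj (p ⟨0, by omega⟩) w → w ∈ Set.range p :=
    fun w hw => nbr_head_mem_range hmax hadj hinj hw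
  have hnl : ∀ w, G.Adj (p ⟨k, by omega⟩) w → w ∈ Set.range p :=
    fun w hw => nbr_last_mem_range hmax hadj hinj hw
  have hA := card_chord_head hinj hnh
  have hB := card_chord_last hinj hnl
  by_contra hcon
  push_neg at hcon
  set A := Finset.univ.filter fun i : Fin k =>
    G.Adj (p ⟨0, by omega⟩) (p ⟨i.val + 1, by omega⟩) with hAdef
  set B := Finset.univ.filter fun i : Fin k =>
    G.Adj (p ⟨k, by omega⟩) (p ⟨i.val, by omega⟩) with hBdef
  have hdisj : Disjoint A B := by
    rw [Finset.disjoint_left]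
    intro i hiA hiB
    rw [hAdef, Finset.mem_filter] at hiA
    rw [hBdef, Finset.mem_filter] at hiB
    exact hcon i.val i.isLt hiA.2 hiB.2
  have hunion : (A ∪ B).card ≤ k := by
    calc (A ∪ B).card ≤ (Finset.univ : Finset (Fin k)).card := Finset.card_le_card (Finset.subset_univ _)
      _ = k := by rw [card_univ, Fintype.card_fin]
  rw [Finset.card_union_of_disjoint hdisj] at hunion
  have hd1 := hdeg (p ⟨0, by omega⟩)
  have hd2 := hdeg (p ⟨k, by omega⟩)
  have hk1 : k + 1 ≤ m := by
    have := Fintype.card_le_of_injective p hinj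
    rwa [Fintype.card_fin] at this
  omega

/-- Rotation: a path plus a crossing chord yields a cycle on the same vertex set. -/
lemma rotate_cycle
    (hadj : ∀ i : ℕ, (h : i < k) → G.Adj (p ⟨i, by omega⟩) (p ⟨i+1, by omega⟩))
    (hinj : Function.Injective p)
    {i : ℕ} (hik : i < k)
    (hA : G.Adj (p ⟨0, by omega⟩) (p ⟨i+1, by omega⟩))
    (hB : G.Adj (p ⟨k, by omega⟩) (p ⟨i, by omega⟩)) :
    ∃ c : Fin (k+1) → α, Function.Injective c ∧ Set.range c = Set.range p ∧
      ∀ j : ℕ, (h : j < k+1) →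
        G.Adj (c ⟨j, h⟩) (c ⟨(j+1) % (k+1), Nat.mod_lt _ (Nat.succ_pos k)⟩) := by
  refine ⟨fun j => p ⟨if j.val ≤ i then j.val else k + i + 1 - j.val, by split <;> omega⟩,
    ?_, ?_, ?_⟩
  · intro a b hab
    have h2 := hinj hab
    rw [Fin.mk.injEq] at h2
    have hal := a.isLt
    have hbl := b.isLt
    by_cases ha : a.val ≤ i <;> by_cases hb : b.val ≤ i
    · rw [if_pos ha, if_pos hb] at h2; exact Fin.ext (by omega)
    · rw [if_pos ha, if_neg hb] at h2; exact Fin.ext (by omega)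
    · rw [if_neg ha, if_pos hb] at h2; exact Fin.ext (by omega)
    · rw [if_neg ha, if_neg hb] at h2; exact Fin.ext (by omega)
  · apply Set.eq_of_subset_of_subset
    · rintro w ⟨j, rfl⟩
      exact ⟨_, rfl⟩
    · rintro w ⟨t, rfl⟩
      have htl := t.isLt
      by_cases ht : t.val ≤ i
      · refine ⟨⟨t.val, by omega⟩, ?_⟩
        apply congrArg
        apply Fin.ext
        show (if t.val ≤ i then t.val else k + i + 1 - t.val) = t.val
        rw [if_pos ht]
      · refine ⟨⟨k + i + 1 - t.val, by omega⟩, ?_⟩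
        apply congrArg
        apply Fin.ext
        show (if k + i + 1 - t.val ≤ i then k + i + 1 - t.val
          else k + i + 1 - (k + i + 1 - t.val)) = t.val
        rw [if_neg (by omega)]
        omega
  · intro j hj
    rcases lt_trichotomy j i with hji | hji | hji
    · have e1 : (j + 1) % (k + 1) = j + 1 := Nat.mod_eq_of_lt (by omega)
      beta_reduce
      convert hadj j (by omega) using 2
      · exact Fin.ext (show (if j ≤ i then j else k + i + 1 - j) = j from
          by rw [if_pos (by omega : j ≤ i)])
      · exact Fin.ext (show (if (j+1) % (k+1) ≤ i then (j+1) % (k+1)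
            else k + i + 1 - (j+1) % (k+1)) = j + 1 from
          by rw [e1, if_pos (by omega : j + 1 ≤ i)])
    · have e1 : (j + 1) % (k + 1) = j + 1 := Nat.mod_eq_of_lt (by omega)
      beta_reduce
      convert hB.symm using 2
      · exact Fin.ext (show (if j ≤ i then j else k + i + 1 - j) = i from
          by rw [if_pos (by omega : j ≤ i)]; omega)
      · exact Fin.ext (show (if (j+1) % (k+1) ≤ i then (j+1) % (k+1)
            else k + i + 1 - (j+1) % (k+1)) = k from
          by rw [e1, if_neg (by omega : ¬ j + 1 ≤ i)]; omega)
    · rcases Nat.lt_or_ge j k with hjk | hjk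
      · have e1 : (j + 1) % (k + 1) = j + 1 := Nat.mod_eq_of_lt (by omega)
        beta_reduce
        convert (hadj (k + i - j) (by omega)).symm using 2
        · exact Fin.ext (show (if j ≤ i then j else k + i + 1 - j) = (k + i - j) + 1 from
            by rw [if_neg (by omega : ¬ j ≤ i)]; omega)
        · exact Fin.ext (show (if (j+1) % (k+1) ≤ i then (j+1) % (k+1)
              else k + i + 1 - (j+1) % (k+1)) = k + i - j from
            by rw [e1, if_neg (by omega : ¬ j + 1 ≤ i)]; omega)
      · have hjeq : j = k := by omega
        have e1 : (j + 1) % (k + 1) = 0 := by rw [hjeq]; exact Nat.mod_self _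
        beta_reduce
        convert hA.symm using 2
        · exact Fin.ext (show (if j ≤ i then j else k + i + 1 - j) = i + 1 from
            by rw [if_neg (by omega : ¬ j ≤ i)]; omega)
        · exact Fin.ext (show (if (j+1) % (k+1) ≤ i then (j+1) % (k+1)
              else k + i + 1 - (j+1) % (k+1)) = 0 from
            by rw [e1, if_pos (Nat.zero_le i)])

end path

/-- Dirac's theorem, in "explicit cycle function" form. -/
theorem dirac_cycle {m : ℕ} [NeZero m] (hcard : Fintype.card α = m) (h3 : 3 ≤ m)
    (hdeg : ∀ v, m ≤ 2 * G.degree v) :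
    ∃ c : Fin m → α, Function.Injective c ∧ ∀ i : Fin m, G.Adj (c i) (c (i + 1)) := by
  classical
  have hne : Nonempty α := by
    rw [← Fintype.card_pos_iff, hcard]; omega
  obtain ⟨a⟩ := hne
  set L : Set ℕ := {k | ∃ p : Fin (k+1) → α, Function.Injective p ∧
    ∀ i : ℕ, (h : i < k) → G.Adj (p ⟨i, by omega⟩) (p ⟨i+1, by omega⟩)} with hLdef
  have h0 : 0 ∈ L := ⟨fun _ => a, fun x y _ => Fin.ext (by omega), fun i h => absurd h (by omega)⟩
  have hbdd : BddAbove L := by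
    refine ⟨m, fun k hk => ?_⟩
    obtain ⟨p, hp, -⟩ := hk
    have := Fintype.card_le_of_injective p hp
    rw [Fintype.card_fin, hcard] at this
    omega
  set k := sSup L with hkdef
  have hkL : k ∈ L := Nat.sSup_mem ⟨0, h0⟩ hbdd
  obtain ⟨p, hinj, hadj⟩ := hkL
  have hmax : ∀ q : Fin (k+2) → α, Function.Injective q →
      (∀ i : ℕ, (h : i < k+1) → G.Adj (q ⟨i, by omega⟩) (q ⟨i+1, by omega⟩)) → False := by
    intro q hq hqa
    have hmem : k + 1 ∈ L := ⟨q, hq, hqa⟩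
    have := le_csSup hbdd hmem
    omega
  have hk1 : k + 1 ≤ m := by
    have := Fintype.card_le_of_injective p hinj
    rwa [Fintype.card_fin, hcard] at this
  -- degree of head is at most k, so 2*k ≥ m
  have hdeghead : G.degree (p ⟨0, by omega⟩) ≤ k :=
    deg_le_of_nbrs_in_range hinj ⟨_, rfl⟩ (fun w hw => nbr_head_mem_range hmax hadj hinj hw)
  have h2k : m ≤ 2 * k := le_trans (hdeg _) (Nat.mul_le_mul_left 2 hdeghead)
  obtain ⟨i, hik, hcA, hcB⟩ := exists_chord hmax hadj hinj (by rw [hcard]; exact hdeg)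
  obtain ⟨c, hcinj, hcrange, hcadj⟩ := rotate_cycle hadj hinj hik hcA hcB
  -- the cycle must be spanning
  have hkm : k + 1 = m := by
    by_contra hkm
    have hlt : k + 1 < m := by omega
    have hex : ∃ w, w ∉ Set.range c := by
      by_contra hcon
      push_neg at hcon
      have hsurj : Function.Surjective c := fun w => hcon w
      have := Fintype.card_le_of_surjective c hsurj
      rw [Fintype.card_fin, hcard] at this
      omega
    obtain ⟨w, hw⟩ := hex
    have hnbr : ∃ j : Fin (k+1), G.Adj w (c j) := by
      by_contra hcon
      push_neg at hcon
      have hsub : G.neighborFinset w ⊆ (Finset.univ \ (Finset.univ.image c)).erase w := by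
        intro x hx
        rw [mem_neighborFinset] at hx
        refine Finset.mem_erase.2 ⟨hx.ne', Finset.mem_sdiff.2 ⟨Finset.mem_univ _, ?_⟩⟩
        intro hmem
        obtain ⟨j, -, rfl⟩ := Finset.mem_image.1 hmem
        exact hcon j hx
      have himg : (Finset.univ.image c).card = k + 1 := by
        rw [Finset.card_image_of_injective _ hcinj, card_univ, Fintype.card_fin]
      have hcards : ((Finset.univ \ (Finset.univ.image c)).erase w).card ≤ m - (k+1) - 1 := by
        have h4 : (Finset.univ \ (Finset.univ.image c)).card = m - (k+1) := by
          rw [Finset.card_sdiff_of_subset (Finset.subset_univ _), card_univ, hcard, himg]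
        have hwmem : w ∈ Finset.univ \ (Finset.univ.image c) := by
          refine Finset.mem_sdiff.2 ⟨Finset.mem_univ _, ?_⟩
          intro hmem
          obtain ⟨j, -, hj⟩ := Finset.mem_image.1 hmem
          exact hw ⟨j, hj⟩
        rw [Finset.card_erase_of_mem hwmem, h4]
      have hdw := hdeg w
      have : G.degree w ≤ m - (k+1) - 1 := le_trans (Finset.card_le_card hsub) hcards
      omega
    obtain ⟨j, hj⟩ := hnbr
    -- extend to a longer path, contradiction
    apply hmax (fun t => if t.val = 0 then w else c ⟨(j.val + (t.val - 1)) % (k+1), by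
      exact Nat.mod_lt _ (by omega)⟩)
    · intro a b hab
      by_cases ha : a.val = 0 <;> by_cases hb : b.val = 0
      · exact Fin.ext (by omega)
      · simp only [if_pos ha, if_neg hb] at hab
        exact absurd ⟨_, hab.symm⟩ hw
      · simp only [if_neg ha, if_pos hb] at hab
        exact absurd ⟨_, hab⟩ hw
      · simp only [if_neg ha, if_neg hb] at hab
        have h2 := hcinj hab
        rw [Fin.mk.injEq] at h2
        have := mod_cancel (K := k+1) (by omega : a.val - 1 < k + 1)
          (by omega : b.val - 1 < k + 1) h2
        exact Fin.ext (by omega)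
    · intro t ht
      by_cases ht0 : t = 0
      · subst ht0
        simp only [if_pos rfl, if_neg (by omega : ¬ (0:ℕ) + 1 = 0)]
        have e1 : (⟨(j.val + (0 + 1 - 1)) % (k+1), Nat.mod_lt _ (by omega)⟩ : Fin (k+1)) = j := by
          rw [Fin.ext_iff]; simp [Nat.mod_eq_of_lt j.isLt]
        rw [e1]
        exact hj
      · simp only [if_neg (by omega : ¬ t = 0), if_neg (by omega : ¬ t + 1 = 0)]
        have h2 := hcadj ((j.val + (t - 1)) % (k+1)) (Nat.mod_lt _ (by omega))
        have e2 : ((j.val + (t - 1)) % (k+1) + 1) % (k+1) = (j.val + (t + 1 - 1)) % (k+1) := by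
          rw [Nat.mod_add_mod]
          congr 1
          omega
        convert h2 using 2
        exact Fin.ext e2.symm
  -- transport the cycle to `Fin m`
  refine ⟨fun t => c ⟨t.val, by omega⟩, ?_, ?_⟩
  · intro x y hxy
    have h2 := hcinj hxy
    rw [Fin.mk.injEq] at h2
    exact Fin.ext h2
  · intro t
    have h2 := hcadj t.val (by omega)
    have e1 : ((t + 1 : Fin m)).val = (t.val + 1) % (k + 1) := by
      rw [Fin.val_add, hkm, Fin.val_one' m, Nat.mod_eq_of_lt (show 1 < m by omega)]
    convert h2 using 2
    exact Fin.ext e1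


end Dirac

section copies
variable {α : Type*} [Fintype α] [DecidableEq α] {G : SimpleGraph α} [DecidableRel G.Adj]

lemma hasCopy_star_of_degree {n : ℕ} {v : α} (hv : n ≤ G.degree v) :
    HasCopy G (_root_.starGraph n) := by
  obtain ⟨S, hS, hScard⟩ := Finset.exists_subset_card_eq hv
  have hadj : ∀ x ∈ S, G.Adj v x := by
    intro x hx
    have := hS hx
    rwa [mem_neighborFinset] at this
  let e : Fin n ≃ S := (S.equivFin.trans (Equiv.cast (by rw [hScard]))).symm
  refine ⟨⟨Sum.elim (fun _ => v) (fun i => (e i : α)), ?_⟩, ?_⟩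
  · intro a b hab
    rcases a with a | a <;> rcases b with b | b
    · simp [_root_.starGraph] at hab
    · exact hadj _ (e b).2
    · exact (hadj _ (e a).2).symm
    · simp [_root_.starGraph] at hab
  · intro a b hab
    rcases a with a | a <;> rcases b with b | b
    · simp
    · exact absurd hab (G.ne_of_adj (hadj _ (e b).2))
    · exact absurd hab.symm (G.ne_of_adj (hadj _ (e a).2))
    · have h3 : e a = e b := Subtype.ext hab
      simp [e.injective h3]

lemma exists_degree_of_hasCopy_star {n : ℕ} (h : HasCopy G (_root_.starGraph n)) :
    ∃ v, n ≤ G.degree v := by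
  obtain ⟨f, hf⟩ := h
  refine ⟨f (Sum.inl ()), ?_⟩
  have hmaps : ∀ i : Fin n, f (Sum.inr i) ∈ G.neighborFinset (f (Sum.inl ())) := by
    intro i
    rw [mem_neighborFinset]
    exact f.map_adj (by simp [_root_.starGraph])
  calc n = (Finset.univ : Finset (Fin n)).card := by simp
    _ ≤ (G.neighborFinset (f (Sum.inl ()))).card :=
        Finset.card_le_card_of_injOn (fun i => f (Sum.inr i)) (fun i _ => hmaps i)
          (fun a _ b _ hab => by
            have := hf hab
            simpa using this)
    _ = G.degree _ := rfl

lemma exists_degree_of_hasCopy_wheel {m : ℕ} (h : HasCopy G (wheelGraph m)) :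
    ∃ v, m ≤ G.degree v := by
  obtain ⟨f, hf⟩ := h
  refine ⟨f none, ?_⟩
  have hmaps : ∀ i : Fin m, f (some i) ∈ G.neighborFinset (f none) := by
    intro i
    rw [mem_neighborFinset]
    exact f.map_adj (by constructor)
  calc m = (Finset.univ : Finset (Fin m)).card := by simp
    _ ≤ (G.neighborFinset (f none)).card :=
        Finset.card_le_card_of_injOn (fun i => f (some i)) (fun i _ => hmaps i)
          (fun a _ b _ hab => by
            have := hf hab
            simpa using this)
    _ = G.degree _ := rfl

lemma hasCopy_wheel_of_cycle {m : ℕ} [NeZero m] (h2 : 2 ≤ m) {v : α} {c : Fin m → α}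
    (hcinj : Function.Injective c) (hhub : ∀ i, G.Adj v (c i))
    (hcyc : ∀ i, G.Adj (c i) (c (i + 1))) : HasCopy G (wheelGraph m) := by
  refine ⟨⟨fun x => x.elim v c, ?_⟩, ?_⟩
  · rintro (_ | a) (_ | b) hab
    · exact False.elim hab
    · exact hhub b
    · exact (hhub a).symm
    · have hab' : (cycleGraph m).Adj a b := hab
      rw [cycleGraph_adj'] at hab'
      rcases hab' with hab' | hab'
      · have h1 : a - b = 1 := Fin.ext (by
          rw [hab', Fin.val_one', Nat.mod_eq_of_lt (by omega)])
        have hb : a = b + 1 := by rw [← h1, add_comm, sub_add_cancel]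
        subst hb
        exact (hcyc b).symm
      · have h1 : b - a = 1 := Fin.ext (by
          rw [hab', Fin.val_one', Nat.mod_eq_of_lt (by omega)])
        have hb : b = a + 1 := by rw [← h1, add_comm, sub_add_cancel]
        subst hb
        exact hcyc a
  · rintro (_ | a) (_ | b) hab
    · rfl
    · exact absurd hab (G.ne_of_adj (hhub b))
    · exact absurd hab.symm (G.ne_of_adj (hhub a))
    · have : c a = c b := hab
      rw [hcinj this]
end copies

section upper
variable {r n m : ℕ}

lemma hasCopy_wheel_compl (hn : 2 ≤ n) (hm : 2 * n ≤ m) (hr2 : r ≤ n + m)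
    (G : SimpleGraph (Fin r)) [DecidableRel G.Adj]
    (hdegG : ∀ w, G.degree w ≤ n - 1)
    {v : Fin r} (hv : m ≤ Gᶜ.degree v) : HasCopy Gᶜ (wheelGraph m) := by
  haveI : NeZero m := ⟨by omega⟩
  have hrm : m < r := lt_of_le_of_lt hv (Gᶜ.degree_lt_card_verts v |>.trans_eq (Fintype.card_fin r))
  obtain ⟨S, hSsub, hScard⟩ := Finset.exists_subset_card_eq hv
  let G' : SimpleGraph {x // x ∈ S} := Gᶜ.comap Subtype.val
  haveI : DecidableRel G'.Adj := Classical.decRel _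
  have hcard : Fintype.card {x // x ∈ S} = m := by rw [Fintype.card_coe, hScard]
  have hdeg' : ∀ u : {x // x ∈ S}, m ≤ 2 * G'.degree u := by
    intro u
    have h1 : G'.degree u = ((Gᶜ.neighborFinset u.val) ∩ S).card := by
      rw [← card_neighborFinset_eq_degree]
      apply Finset.card_bij (fun w _ => w.val)
      · intro w hw
        rw [mem_neighborFinset] at hw
        exact Finset.mem_inter.2 ⟨(mem_neighborFinset _ _ _).2 hw, w.2⟩
      · intro a _ b _ hab
        exact Subtype.ext hab
      · intro w hw
        rw [Finset.mem_inter, mem_neighborFinset] at hw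
        exact ⟨⟨w, hw.2⟩, (mem_neighborFinset _ _ _).2 hw.1, rfl⟩
    have h2 : (Gᶜ.neighborFinset u.val).card ≤ ((Gᶜ.neighborFinset u.val) ∩ S).card + (r - m) := by
      have h3 : (Gᶜ.neighborFinset u.val) \ S ⊆ Finset.univ \ S := by
        intro x hx
        rw [Finset.mem_sdiff] at hx ⊢
        exact ⟨Finset.mem_univ _, hx.2⟩
      have h4 := Finset.card_le_card h3
      rw [Finset.card_sdiff_of_subset (Finset.subset_univ _), card_univ, Fintype.card_fin, hScard] at h4
      have h5 := Finset.card_inter_add_card_sdiff (Gᶜ.neighborFinset u.val) S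
      omega
    have h6 : Gᶜ.degree u.val = r - 1 - G.degree u.val := by
      rw [G.degree_compl, Fintype.card_fin]
    have h6' : (Gᶜ.neighborFinset u.val).card = Gᶜ.degree u.val := card_neighborFinset_eq_degree _ _
    have h7 := hdegG u.val
    rw [h1]
    omega
  obtain ⟨c, hcinj, hcyc⟩ := dirac_cycle (G := G') hcard (by omega) hdeg'
  apply hasCopy_wheel_of_cycle (v := v) (c := fun i => (c i).val) (by omega : 2 ≤ m)
  · intro x y hxy
    exact hcinj (Subtype.ext hxy)
  · intro i
    have h8 := hSsub (c i).2
    rwa [mem_neighborFinset] at h8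
  · intro i
    exact hcyc i

lemma exists_degree_lt (hn : 2 ≤ n) (heven_n : Even n) (heven_m : Even m)
    (G : SimpleGraph (Fin (n + m - 1))) [DecidableRel G.Adj]
    (hdegG : ∀ w, G.degree w ≤ n - 1) : ∃ v, G.degree v ≤ n - 2 := by
  by_contra hcon
  push_neg at hcon
  have hall : ∀ v, G.degree v = n - 1 := fun v => le_antisymm (hdegG v) (by have := hcon v; omega)
  have hsum := G.sum_degrees_eq_twice_card_edges
  rw [Finset.sum_congr rfl (fun v _ => hall v), Finset.sum_const, card_univ, Fintype.card_fin,
    smul_eq_mul] at hsum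
  have hodd : Odd ((n + m - 1) * (n - 1)) := by
    rw [Nat.odd_mul]
    obtain ⟨a, ha⟩ := heven_n
    obtain ⟨b, hb⟩ := heven_m
    constructor <;> rw [Nat.odd_iff] <;> omega
  rw [hsum] at hodd
  rw [Nat.odd_iff] at hodd
  omega

lemma hasCopy_mono {α β γ : Type*} {G : SimpleGraph α} {H : SimpleGraph β} {X : SimpleGraph γ}
    (f : G →g H) (hf : Function.Injective f) (h : HasCopy G X) : HasCopy H X := by
  obtain ⟨g, hg⟩ := h
  exact ⟨f.comp g, hf.comp hg⟩

lemma not_isRamsey_of_le {α β : Type*} {G₁ : SimpleGraph α} {G₂ : SimpleGraph β} {r s : ℕ}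
    (hrs : r ≤ s) (h : ¬ IsRamsey G₁ G₂ s) : ¬ IsRamsey G₁ G₂ r := by
  intro hR
  apply h
  intro H
  rcases hR (H.comap (Fin.castLE hrs)) with hc | hc
  · left
    exact hasCopy_mono ⟨Fin.castLE hrs, fun hadj => hadj⟩
      (Fin.castLE_injective hrs) hc
  · right
    refine hasCopy_mono ⟨Fin.castLE hrs, ?_⟩ (Fin.castLE_injective hrs) hc
    intro a b hadj
    rw [compl_adj] at hadj ⊢
    exact ⟨fun he => hadj.1 (Fin.castLE_injective hrs he), hadj.2⟩

lemma no_copy_of_small_degrees {N : ℕ} (G : SimpleGraph (Fin N)) [DecidableRel G.Adj]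
    (h1 : ∀ v, G.degree v < n) (h2 : ∀ v, Gᶜ.degree v < m) :
    ¬ IsRamsey (_root_.starGraph n) (wheelGraph m) N := by
  intro hR
  rcases hR G with hc | hc
  · obtain ⟨v, hv⟩ := exists_degree_of_hasCopy_star hc
    exact absurd hv (by have := h1 v; omega)
  · obtain ⟨v, hv⟩ := exists_degree_of_hasCopy_wheel hc
    exact absurd hv (by have := h2 v; omega)

end upper

section circulant
variable {N : ℕ} [NeZero N]

private lemma fin_val_neg {d : Fin N} (hd : d ≠ 0) : (-d).val = N - d.val := by
  have h1 : d.val ≠ 0 := fun h => hd (Fin.ext h)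
  have h2 := d.isLt
  rw [Fin.coe_neg, Nat.mod_eq_of_lt (by omega)]

lemma circ_degree (Q : ℕ → Prop) [DecidablePred Q]
    [DecidableRel (circulantGraph {d : Fin N | Q d.val}).Adj] (v : Fin N) :
    (circulantGraph {d : Fin N | Q d.val}).degree v
      = ((Finset.Icc 1 (N - 1)).filter (fun x => Q x ∨ Q (N - x))).card := by
  rw [← card_neighborFinset_eq_degree]
  apply Finset.card_bij (fun w _ => (w - v).val)
  · intro w hw
    rw [mem_neighborFinset, circulantGraph_adj] at hw
    obtain ⟨hne, hQ⟩ := hw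
    have hd0 : w - v ≠ 0 := sub_ne_zero_of_ne (Ne.symm hne)
    have hd0' : (w - v).val ≠ 0 := fun h => hd0 (Fin.ext h)
    have hlt := (w - v).isLt
    rw [Finset.mem_filter, Finset.mem_Icc]
    refine ⟨⟨by omega, by omega⟩, ?_⟩
    have hvw : (v - w).val = N - (w - v).val := by
      rw [show v - w = -(w - v) by abel, fin_val_neg hd0]
    rcases hQ with hQ | hQ
    · rw [Set.mem_setOf_eq, hvw] at hQ
      exact Or.inr hQ
    · rw [Set.mem_setOf_eq] at hQ
      exact Or.inl hQ
  · intro a ha b hb hab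
    have : a - v = b - v := Fin.ext hab
    exact sub_left_injective this
  · intro x hx
    rw [Finset.mem_filter, Finset.mem_Icc] at hx
    obtain ⟨⟨hx1, hx2⟩, hQ⟩ := hx
    have hN1 : 1 ≤ N := Nat.one_le_iff_ne_zero.2 (NeZero.ne N)
    refine ⟨v + ⟨x, by omega⟩, ?_, ?_⟩
    · rw [mem_neighborFinset, circulantGraph_adj]
      have he : v + ⟨x, by omega⟩ - v = (⟨x, by omega⟩ : Fin N) := by abel
      constructor
      · intro hvv
        have : (⟨x, by omega⟩ : Fin N) = 0 := by
          rw [← he, ← hvv]; abel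
        rw [Fin.ext_iff] at this
        simp at this
        omega
      · have hvw : v - (v + ⟨x, by omega⟩) = -(⟨x, by omega⟩ : Fin N) := by abel
        rcases hQ with hQ | hQ
        · right
          rw [Set.mem_setOf_eq, he]
          exact hQ
        · left
          rw [Set.mem_setOf_eq, hvw, fin_val_neg (by
            intro h0
            rw [Fin.ext_iff] at h0
            simp at h0
            omega)]
          exact hQ
    · rw [show v + ⟨x, by omega⟩ - v = (⟨x, by omega⟩ : Fin N) by abel]

lemma circ_degree_even {a : ℕ} (ha : 2 * a ≤ N - 1) [NeZero N]
    [DecidableRel (circulantGraph {d : Fin N | 1 ≤ d.val ∧ d.val ≤ a}).Adj] (v : Fin N) :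
    (circulantGraph {d : Fin N | 1 ≤ d.val ∧ d.val ≤ a}).degree v = 2 * a := by
  refine (circ_degree (fun x => 1 ≤ x ∧ x ≤ a) v).trans ?_
  have hN1 : 1 ≤ N := Nat.one_le_iff_ne_zero.2 (NeZero.ne N)
  have hset : (Finset.Icc 1 (N - 1)).filter (fun x => (1 ≤ x ∧ x ≤ a) ∨ (1 ≤ N - x ∧ N - x ≤ a))
      = Finset.Icc 1 a ∪ Finset.Icc (N - a) (N - 1) := by
    ext x
    simp only [Finset.mem_filter, Finset.mem_Icc, Finset.mem_union]
    omega
  rw [hset, Finset.card_union_of_disjoint (by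
    rw [Finset.disjoint_left]
    intro x hx1 hx2
    rw [Finset.mem_Icc] at hx1 hx2
    omega)]
  rw [Nat.card_Icc, Nat.card_Icc]
  omega

lemma circ_degree_odd {a : ℕ} (ha : 2 * a + 2 ≤ N) (hNe : N % 2 = 0) [NeZero N]
    [DecidableRel (circulantGraph {d : Fin N | (1 ≤ d.val ∧ d.val ≤ a) ∨ 2 * d.val = N}).Adj]
    (v : Fin N) :
    (circulantGraph {d : Fin N | (1 ≤ d.val ∧ d.val ≤ a) ∨ 2 * d.val = N}).degree v
      = 2 * a + 1 := by
  refine (circ_degree (fun x => (1 ≤ x ∧ x ≤ a) ∨ 2 * x = N) v).trans ?_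
  have hN1 : 1 ≤ N := Nat.one_le_iff_ne_zero.2 (NeZero.ne N)
  have hset : (Finset.Icc 1 (N - 1)).filter
        (fun x => ((1 ≤ x ∧ x ≤ a) ∨ 2 * x = N) ∨ ((1 ≤ N - x ∧ N - x ≤ a) ∨ 2 * (N - x) = N))
      = (Finset.Icc 1 a ∪ Finset.Icc (N - a) (N - 1)) ∪ {N / 2} := by
    ext x
    simp only [Finset.mem_filter, Finset.mem_Icc, Finset.mem_union, Finset.mem_singleton]
    omega
  rw [hset, Finset.card_union_of_disjoint (by
    rw [Finset.disjoint_left]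
    intro x hx1 hx2
    rw [Finset.mem_union, Finset.mem_Icc, Finset.mem_Icc] at hx1
    rw [Finset.mem_singleton] at hx2
    omega)]
  rw [Finset.card_union_of_disjoint (by
    rw [Finset.disjoint_left]
    intro x hx1 hx2
    rw [Finset.mem_Icc] at hx1 hx2
    omega)]
  rw [Nat.card_Icc, Nat.card_Icc, Finset.card_singleton]
  omega

end circulant


/-- Hasmawati's theorem: for `n ≥ 2` and `m ≥ 2n`,
`R(K_{1,n}, W_m) = n + m - 1` if both `n` and `m` are even, and `n + m` otherwise. -/
theorem star_wheel_ramsey_large (n m : ℕ) (hn : 2 ≤ n) (hm : 2 * n ≤ m) :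
    ramseyNumber (_root_.starGraph n) (wheelGraph m) =
      if Even n ∧ Even m then n + m - 1 else n + m := by
  classical
  -- upper bound at n + m (always)
  have h2 : IsRamsey (_root_.starGraph n) (wheelGraph m) (n + m) := by
    intro G
    letI : DecidableRel G.Adj := Classical.decRel G.Adj
    by_cases hstar : HasCopy G (_root_.starGraph n)
    · exact Or.inl hstar
    right
    have hdegG : ∀ w, G.degree w ≤ n - 1 := by
      intro w
      by_contra hw
      exact hstar (hasCopy_star_of_degree (v := w) (by omega))
    have hv : m ≤ Gᶜ.degree (⟨0, by omega⟩ : Fin (n + m)) := by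
      rw [G.degree_compl, Fintype.card_fin]
      have := hdegG ⟨0, by omega⟩
      omega
    exact hasCopy_wheel_compl hn hm (le_refl _) G hdegG hv
  -- upper bound at n + m - 1 when both even
  have h1 : Even n → Even m → IsRamsey (_root_.starGraph n) (wheelGraph m) (n + m - 1) := by
    intro hen hem G
    letI : DecidableRel G.Adj := Classical.decRel G.Adj
    by_cases hstar : HasCopy G (_root_.starGraph n)
    · exact Or.inl hstar
    right
    have hdegG : ∀ w, G.degree w ≤ n - 1 := by
      intro w
      by_contra hw
      exact hstar (hasCopy_star_of_degree (v := w) (by omega))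
    obtain ⟨v, hv⟩ := exists_degree_lt hn hen hem G hdegG
    have hv' : m ≤ Gᶜ.degree v := by
      rw [G.degree_compl, Fintype.card_fin]
      omega
    exact hasCopy_wheel_compl hn hm (by omega) G hdegG hv'
  -- lower bound: no Ramsey at n + m - 2 when both even
  have h3 : Even n → Even m → ¬ IsRamsey (_root_.starGraph n) (wheelGraph m) (n + m - 2) := by
    intro hen hem
    have hn2 : n % 2 = 0 := Nat.even_iff.mp hen
    have hm2 : m % 2 = 0 := Nat.even_iff.mp hem
    haveI : NeZero (n + m - 2) := ⟨by omega⟩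
    set Gc : SimpleGraph (Fin (n + m - 2)) :=
      circulantGraph {d : Fin (n + m - 2) | 1 ≤ d.val ∧ d.val ≤ (n - 2) / 2} with hGcdef
    letI : DecidableRel Gc.Adj := Classical.decRel _
    have hdeg : ∀ v, Gc.degree v = n - 2 := by
      intro v
      rw [circ_degree_even (by omega)]
      omega
    apply no_copy_of_small_degrees Gc
    · intro v
      rw [hdeg v]
      omega
    · intro v
      rw [Gc.degree_compl, Fintype.card_fin, hdeg v]
      omega
  -- lower bound: no Ramsey at n + m - 1 when not both even
  have h4 : ¬ (Even n ∧ Even m) → ¬ IsRamsey (_root_.starGraph n) (wheelGraph m) (n + m - 1) := by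
    intro hpar
    haveI : NeZero (n + m - 1) := ⟨by omega⟩
    by_cases hen : Even n
    · -- n even, m odd
      have hn2 : n % 2 = 0 := Nat.even_iff.mp hen
      have hm2 : m % 2 = 1 := by
        rcases Nat.even_or_odd m with hem | hom
        · exact absurd ⟨hen, hem⟩ hpar
        · exact Nat.odd_iff.mp hom
      set Gc : SimpleGraph (Fin (n + m - 1)) :=
        circulantGraph {d : Fin (n + m - 1) |
          (1 ≤ d.val ∧ d.val ≤ (n - 2) / 2) ∨ 2 * d.val = n + m - 1} with hGcdef
      letI : DecidableRel Gc.Adj := Classical.decRel _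
      have hdeg : ∀ v, Gc.degree v = n - 1 := by
        intro v
        rw [circ_degree_odd (by omega) (by omega)]
        omega
      apply no_copy_of_small_degrees Gc
      · intro v
        rw [hdeg v]
        omega
      · intro v
        rw [Gc.degree_compl, Fintype.card_fin, hdeg v]
        omega
    · -- n odd
      have hn2 : n % 2 = 1 := Nat.odd_iff.mp (Nat.not_even_iff_odd.mp hen)
      set Gc : SimpleGraph (Fin (n + m - 1)) :=
        circulantGraph {d : Fin (n + m - 1) | 1 ≤ d.val ∧ d.val ≤ (n - 1) / 2} with hGcdef
      letI : DecidableRel Gc.Adj := Classical.decRel _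
      have hdeg : ∀ v, Gc.degree v = n - 1 := by
        intro v
        rw [circ_degree_even (by omega)]
        omega
      apply no_copy_of_small_degrees Gc
      · intro v
        rw [hdeg v]
        omega
      · intro v
        rw [Gc.degree_compl, Fintype.card_fin, hdeg v]
        omega
  by_cases hpar : Even n ∧ Even m
  · rw [if_pos hpar]
    have hmem := h1 hpar.1 hpar.2
    have hnot := h3 hpar.1 hpar.2
    have hlow : ∀ r, IsRamsey (_root_.starGraph n) (wheelGraph m) r → n + m - 1 ≤ r := by
      intro r hr
      by_contra hlt
      push_neg at hlt
      exact not_isRamsey_of_le (by omega) hnot hr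
    exact le_antisymm (Nat.sInf_le hmem) (hlow _ (Nat.sInf_mem (s := {r | IsRamsey (_root_.starGraph n) (wheelGraph m) r}) ⟨_, hmem⟩))
  · rw [if_neg hpar]
    have hnot := h4 hpar
    have hlow : ∀ r, IsRamsey (_root_.starGraph n) (wheelGraph m) r → n + m ≤ r := by
      intro r hr
      by_contra hlt
      push_neg at hlt
      exact not_isRamsey_of_le (by omega) hnot hr
    exact le_antisymm (Nat.sInf_le h2) (hlow _ (Nat.sInf_mem (s := {r | IsRamsey (_root_.starGraph n) (wheelGraph m) r}) ⟨_, h2⟩))
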